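/- Every circular synchronizing automaton with a prime number of states is simple. -/

import Mathlib

def wordAct {n : ℕ} {A : Type} (δ : Fin n → A → Fin n) (p : Fin n) (u : List A) : Fin n :=
  u.foldl δ p

noncomputable def relDist {n : ℕ} {A : Type} (δ : Fin n → A → Fin n) (a : A) (p q : Fin n) : ℕ :=
  sInf {k : ℕ | wordAct δ p (List.replicate k a) = q ∨ wordAct δ q (List.replicate k a) = p}

/-- The cyclic successor `q ↦ q + 1 (mod n)` on `Fin n`. -/
def cyc {n : ℕ} (q : Fin n) : Fin n :=
  ⟨(q.val + 1) % n, Nat.mod_lt _ (by have := q.isLt; omega)⟩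

def IsCirculating {n : ℕ} {A : Type} (δ : Fin n → A → Fin n) (a : A) : Prop :=
  ∀ q : Fin n, δ q a = cyc q

def IsContracting {n : ℕ} {A : Type} (δ : Fin n → A → Fin n) (a : A) : Prop :=
  ∀ p q : Fin n, 1 < relDist δ a p q →
    ∃ u : List A, 1 ≤ relDist δ a (wordAct δ p u) (wordAct δ q u) ∧
      relDist δ a (wordAct δ p u) (wordAct δ q u) < relDist δ a p q

def IsWeaklyContractingPair {n : ℕ} {A : Type} (δ : Fin n → A → Fin n) (a : A) (p q : Fin n) : Prop :=
  ∀ m : ℕ, (∀ u : List A, wordAct δ p u ≠ wordAct δ q u →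
      m ∣ Nat.gcd (relDist δ a (wordAct δ p u) (wordAct δ q u)) n) → m = 1

def IsWeaklyContracting {n : ℕ} {A : Type} (δ : Fin n → A → Fin n) (a : A) : Prop :=
  ∀ p q : Fin n, p ≠ q → IsWeaklyContractingPair δ a p q

def IsCongruence {n : ℕ} {A : Type} (δ : Fin n → A → Fin n) (σ : Fin n → Fin n → Prop) : Prop :=
  Equivalence σ ∧ ∀ (p q : Fin n) (u : List A), σ p q → σ (wordAct δ p u) (wordAct δ q u)

def IsSimple {n : ℕ} {A : Type} (δ : Fin n → A → Fin n) : Prop :=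
  ∀ σ : Fin n → Fin n → Prop, IsCongruence δ σ → (∀ x y, σ x y → x = y) ∨ (∀ x y, σ x y)

def IsSynchronizing {n : ℕ} {A : Type} (δ : Fin n → A → Fin n) : Prop :=
  ∃ u : List A, ∀ p q : Fin n, wordAct δ p u = wordAct δ q u

open Fin.NatCast Fin.CommRing

theorem stmt12 (n : ℕ) (A : Type) (δ : Fin n → A → Fin n) (a : A)
    (ha : IsCirculating δ a) (hs : IsSynchronizing δ) (hp : n.Prime) :
    IsSimple δ := by
  intro σ hσ
  obtain ⟨heq, hcong⟩ := hσ
  by_cases hdiag : ∀ x y, σ x y → x = y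
  · left; exact hdiag
  · right
    push_neg at hdiag
    obtain ⟨p, q, hpq, hne⟩ := hdiag
    haveI : NeZero n := ⟨hp.ne_zero⟩
    have hrep : ∀ (k : ℕ) (x : Fin n), wordAct δ x (List.replicate k a) = x + (k : Fin n) := by
      intro k
      induction k with
      | zero => intro x; simp [wordAct]
      | succ k ih =>
        intro x
        have h1 : wordAct δ x (List.replicate (k+1) a)
            = wordAct δ (δ x a) (List.replicate k a) := rfl
        rw [h1, ih, ha x]
        have hcyc : cyc x = x + 1 := by
          apply Fin.ext
          show (x.val + 1) % n = _
          rw [Fin.add_def, Fin.val_one', Nat.add_mod x.val 1 n,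
            Nat.mod_eq_of_lt x.isLt]
        rw [hcyc]
        push_cast
        ring
    have hshift : ∀ k : ℕ, σ (p + (k : Fin n)) (q + (k : Fin n)) := by
      intro k
      have := hcong p q (List.replicate k a) hpq
      rwa [hrep, hrep] at this
    have hstep : ∀ x : Fin n, σ x (x + (q - p)) := by
      intro x
      have h := hshift (x - p).val
      rw [Fin.cast_val_eq_self] at h
      have e1 : p + (x - p) = x := by ring
      have e2 : q + (x - p) = x + (q - p) := by ring
      rwa [e1, e2] at h
    have hiter : ∀ (k : ℕ) (x : Fin n), σ x (x + (k : Fin n) * (q - p)) := by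
      intro k
      induction k with
      | zero => intro x; simpa using heq.refl x
      | succ k ih =>
        intro x
        have h1 := ih x
        have h2 := hstep (x + (k : Fin n) * (q - p))
        have e : x + (k : Fin n) * (q - p) + (q - p)
            = x + ((k+1 : ℕ) : Fin n) * (q - p) := by push_cast; ring
        rw [e] at h2
        exact heq.trans h1 h2
    have hzd : ∀ u v : Fin n, u * v = 0 → u = 0 ∨ v = 0 := by
      intro u v h
      have hv : (u.val * v.val) % n = 0 := by
        have := congrArg Fin.val h
        simpa [Fin.mul_def] using this
      rcases hp.dvd_mul.mp (Nat.dvd_of_mod_eq_zero hv) with h' | h'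
      · left; exact Fin.ext (by simpa using Nat.eq_zero_of_dvd_of_lt h' u.isLt)
      · right; exact Fin.ext (by simpa using Nat.eq_zero_of_dvd_of_lt h' v.isLt)
    have hd : q - p ≠ 0 := sub_ne_zero.mpr (Ne.symm hne)
    have hinj : Function.Injective (fun e : Fin n => e * (q - p)) := by
      intro e₁ e₂ h
      simp only at h
      have h0 : (e₁ - e₂) * (q - p) = 0 := by
        rw [sub_mul, h, sub_self]
      rcases hzd _ _ h0 with h' | h'
      · exact sub_eq_zero.mp h'
      · exact absurd h' hd
    have hsurj : ∀ t : Fin n, ∃ e : Fin n, e * (q - p) = t :=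
      fun t => Finite.injective_iff_surjective.mp hinj t
    intro x y
    obtain ⟨e, he⟩ := hsurj (y - x)
    have h := hiter e.val x
    rw [Fin.cast_val_eq_self, he] at h
    have e3 : x + (y - x) = y := by ring
    rwa [e3] at h
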